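/- arXiv:1809.01981 — 2 statements merged into one kernel-verified Lean document; each statement's English description precedes it below -/
import Mathlib

section
/- If E is a free module of rank r over a commutative ring R of prime characteristic p, then the quotient of the symmetric algebra Sym(E) by the ideal generated by the p-th powers e^p of elements e of E is a free R-module of rank p^r, with basis the images of the monomials e₁^{i₁}⋯e_r^{i_r} with 0 ≤ i_j < p for a chosen basis e₁,…,e_r of E. -/
open MvPolynomial

private lemma prod_X_pow_univ {R : Type*} [CommRing R] {r : ℕ} (d : Fin r →₀ ℕ) :
    (∏ j : Fin r, (X j : MvPolynomial (Fin r) R) ^ d j) = monomial d 1 := by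
  rw [← MvPolynomial.prod_X_pow_eq_monomial]
  exact (Finset.prod_subset (Finset.subset_univ _) (by
    intro x _ hx
    simp only [Finsupp.mem_support_iff, not_not] at hx
    rw [hx, pow_zero])).symm

theorem stmt_1 (R : Type*) [CommRing R] (p : ℕ) (hp : p.Prime) [CharP R p] (r : ℕ)
    (J : Ideal (MvPolynomial (Fin r) R))
    (hJ : J = Ideal.span {q : MvPolynomial (Fin r) R |
      ∃ f : Fin r → R, q = (∑ j, MvPolynomial.C (f j) * MvPolynomial.X j) ^ p}) :
    ∃ b : Module.Basis (Fin r → Fin p) R (MvPolynomial (Fin r) R ⧸ J),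
      ∀ i : Fin r → Fin p,
        b i = Ideal.Quotient.mk J (∏ j, MvPolynomial.X j ^ (i j : ℕ)) := by
  haveI : Fact p.Prime := ⟨hp⟩
  have hp0 : 0 < p := hp.pos
  -- Step 1 : J is the ideal generated by the X j ^ p
  have hJ' : J = Ideal.span (Set.range fun j : Fin r => (X j : MvPolynomial (Fin r) R) ^ p) := by
    rw [hJ]
    apply le_antisymm
    · rw [Ideal.span_le]
      rintro q ⟨f, rfl⟩
      rw [sum_pow_char]
      exact Ideal.sum_mem _ fun j _ => by
        rw [mul_pow]
        exact Ideal.mul_mem_left _ _ (Ideal.subset_span ⟨j, rfl⟩)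
    · rw [Ideal.span_le]
      rintro q ⟨j, rfl⟩
      refine Ideal.subset_span ⟨Pi.single j 1, ?_⟩
      have : (∑ k, (C ((Pi.single j 1 : Fin r → R) k) : MvPolynomial (Fin r) R) * X k) = X j := by
        rw [Finset.sum_eq_single j]
        · simp
        · intro k _ hk
          simp [Pi.single_apply, hk.symm]
        · simp
      rw [this]
  -- the reduction map to finsupps
  set g : (Fin r →₀ ℕ) → ((Fin r → Fin p) →₀ R) := fun d =>
    if h : ∀ j, d j < p then Finsupp.single (fun j => ⟨d j, h j⟩) 1 else 0 with hg
  set π : MvPolynomial (Fin r) R →ₗ[R] ((Fin r → Fin p) →₀ R) :=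
    (basisMonomials (Fin r) R).constr R g with hπdef
  have hπmon : ∀ (d : Fin r →₀ ℕ) (a : R), π (monomial d a) = a • g d := by
    intro d a
    have : (monomial d a : MvPolynomial (Fin r) R) = a • monomial d 1 := by
      rw [smul_monomial, smul_eq_mul, mul_one]
    rw [this, map_smul]
    congr 1
    have := Module.Basis.constr_basis (basisMonomials (Fin r) R) R g d
    rwa [coe_basisMonomials] at this
  -- π vanishes on J
  have hker : ∀ q ∈ J, π q = 0 := by
    intro q hq
    rw [hJ'] at hq
    rw [Ideal.mem_span_range_iff_exists_fun] at hq
    obtain ⟨c, rfl⟩ := hq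
    rw [map_sum]
    refine Finset.sum_eq_zero fun j _ => ?_
    induction c j using MvPolynomial.induction_on' with
    | monomial d a =>
      rw [X_pow_eq_monomial, monomial_mul, hπmon]
      have hnot : ¬ ∀ k, (d + Finsupp.single j p) k < p := by
        intro h
        have := h j
        rw [Finsupp.add_apply, Finsupp.single_apply, if_pos rfl] at this
        omega
      rw [hg]
      simp only [dif_neg hnot, smul_zero]
    | add f1 f2 h1 h2 =>
      rw [add_mul, map_add, h1, h2, add_zero]
  -- the family
  set v : (Fin r → Fin p) → (MvPolynomial (Fin r) R ⧸ J) :=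
    fun i => Ideal.Quotient.mk J (∏ j, MvPolynomial.X j ^ (i j : ℕ)) with hv
  have hvmon : ∀ i : Fin r → Fin p,
      v i = Ideal.Quotient.mk J (monomial (Finsupp.equivFunOnFinite.symm fun j => (i j : ℕ)) 1) := by
    intro i
    rw [hv]
    congr 1
    rw [← prod_X_pow_univ]
    rfl
  -- linear independence
  have hli : LinearIndependent R v := by
    rw [Fintype.linearIndependent_iff]
    intro c hc i₀
    have hmem : (∑ i : Fin r → Fin p,
        c i • monomial (Finsupp.equivFunOnFinite.symm fun j => (i j : ℕ)) (1:R)) ∈ J := by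
      rw [← Ideal.Quotient.eq_zero_iff_mem, ← hc]
      rw [map_sum]
      refine Finset.sum_congr rfl fun i _ => ?_
      rw [hvmon i]
      exact (map_smul (Ideal.Quotient.mkₐ R J).toLinearMap (c i) _).symm
    have := hker _ hmem
    rw [map_sum] at this
    have heq : ∀ i : Fin r → Fin p,
        π (c i • monomial (Finsupp.equivFunOnFinite.symm fun j => (i j : ℕ)) (1:R))
          = Finsupp.single i (c i) := by
      intro i
      rw [map_smul, hπmon]
      have hlt : ∀ j, (Finsupp.equivFunOnFinite.symm fun j => ((i j : ℕ))) j < p :=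
        fun j => (i j).isLt
      rw [hg]
      simp only [dif_pos hlt]
      have : (fun j => (⟨(Finsupp.equivFunOnFinite.symm fun j => ((i j : ℕ))) j, hlt j⟩ : Fin p))
          = i := by
        funext j
        exact Fin.ext rfl
      rw [this]
      simp [Finsupp.smul_single]
    simp_rw [heq] at this
    have := congrArg (fun F => F i₀) this
    simpa [Finsupp.single_apply, Finset.sum_ite_eq'] using this
  -- spanning
  have hsp : ⊤ ≤ Submodule.span R (Set.range v) := by
    intro x _
    obtain ⟨q, rfl⟩ := Ideal.Quotient.mk_surjective x
    rw [MvPolynomial.as_sum q, map_sum]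
    refine Submodule.sum_mem _ fun d _ => ?_
    by_cases hd : ∀ j, d j < p
    · have key : Ideal.Quotient.mk J (monomial d (coeff d q))
          = (coeff d q) • v (fun j => ⟨d j, hd j⟩) := by
        rw [hvmon]
        have hde : (Finsupp.equivFunOnFinite.symm fun j => (((⟨d j, hd j⟩ : Fin p) : ℕ))) = d :=
          Finsupp.ext fun j => rfl
        rw [hde]
        have h2 : (monomial d (coeff d q) : MvPolynomial (Fin r) R)
            = coeff d q • monomial d 1 := by
          rw [smul_monomial, smul_eq_mul, mul_one]
        rw [h2]
        exact map_smul (Ideal.Quotient.mkₐ R J).toLinearMap _ _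
      rw [key]
      exact Submodule.smul_mem _ _ (Submodule.subset_span ⟨_, rfl⟩)
    · push_neg at hd
      obtain ⟨j, hj⟩ := hd
      have hmem : (monomial d (coeff d q) : MvPolynomial (Fin r) R) ∈ J := by
        rw [hJ']
        have hle : Finsupp.single j p ≤ d := by
          rw [Finsupp.single_le_iff]
          omega
        have : (monomial d (coeff d q) : MvPolynomial (Fin r) R)
            = X j ^ p * monomial (d - Finsupp.single j p) (coeff d q) := by
          rw [X_pow_eq_monomial, monomial_mul, one_mul]
          congr 1
          rw [add_tsub_cancel_of_le hle]
        rw [this]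
        exact Ideal.mul_mem_right _ _ (Ideal.subset_span ⟨j, rfl⟩)
      rw [Ideal.Quotient.eq_zero_iff_mem.mpr hmem]
      exact Submodule.zero_mem _
  exact ⟨Module.Basis.mk hli hsp, fun i => Module.Basis.mk_apply hli hsp i⟩
end

section
/- For a free module E of rank r over a ring of prime characteristic p, the truncated symmetric algebra τ(E) = Sym(E)/(e^p : e ∈ E) has R-module rank p^r independent of the choice of basis. -/
open MvPolynomial

theorem stmt_2 (R : Type*) [CommRing R] (p : ℕ) (hp : p.Prime) [CharP R p] (r : ℕ)
    (J : Ideal (MvPolynomial (Fin r) R))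
    (hJ : J = Ideal.span {q : MvPolynomial (Fin r) R |
      ∃ f : Fin r → R, q = (∑ j, MvPolynomial.C (f j) * MvPolynomial.X j) ^ p}) :
    Nonempty (Module.Basis (Fin (p ^ r)) R (MvPolynomial (Fin r) R ⧸ J)) := by
  classical
  haveI : Fact p.Prime := ⟨hp⟩
  haveI : CharP (MvPolynomial (Fin r) R) p := inferInstance
  haveI : ExpChar (MvPolynomial (Fin r) R) p := ExpChar.prime hp
  -- the "monomial" ideal containing J: polynomials whose low-degree coefficients vanish
  let K : Ideal (MvPolynomial (Fin r) R) :=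
  { carrier := {q | ∀ d : Fin r →₀ ℕ, (∀ j, d j < p) → coeff d q = 0}
    add_mem' := fun {a b} ha hb d hd => by simp [coeff_add, ha d hd, hb d hd]
    zero_mem' := fun d _ => by simp
    smul_mem' := fun g q hq d hd => by
      rw [smul_eq_mul, coeff_mul]
      refine Finset.sum_eq_zero fun uv huv => ?_
      rw [Finset.HasAntidiagonal.mem_antidiagonal] at huv
      have h2 : ∀ j, uv.2 j < p := by
        intro j
        have h1 := congrArg (fun m : Fin r →₀ ℕ => m j) huv
        simp only [Finsupp.coe_add, Pi.add_apply] at h1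
        have := hd j
        omega
      rw [hq uv.2 h2, mul_zero] }
  have hJK : J ≤ K := by
    rw [hJ, Ideal.span_le]
    rintro q ⟨f, rfl⟩
    intro d hd
    rw [sum_pow_char, coeff_sum]
    refine Finset.sum_eq_zero fun j _ => ?_
    rw [mul_pow, ← C_pow, X_pow_eq_monomial, C_mul_monomial, coeff_monomial,
      if_neg]
    intro h
    have h1 : p = d j := by simpa using congrArg (fun m : Fin r →₀ ℕ => m j) h
    have := hd j
    omega
  have hcoeff : ∀ q ∈ J, ∀ d : Fin r →₀ ℕ, (∀ j, d j < p) → coeff d q = 0 :=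
    fun q hq => hJK hq
  -- X j ^ p ∈ J
  have hXp : ∀ j : Fin r, (X j : MvPolynomial (Fin r) R) ^ p ∈ J := by
    intro j
    rw [hJ]
    refine Ideal.subset_span ⟨Pi.single j 1, ?_⟩
    congr 1
    rw [Finset.sum_eq_single j]
    · simp
    · intro b _ hb
      simp [Pi.single_apply, hb]
    · simp
  -- monomials with some exponent ≥ p lie in J
  have hmono : ∀ μ : Fin r →₀ ℕ, (∃ j, p ≤ μ j) → (monomial μ (1 : R)) ∈ J := by
    rintro μ ⟨j, hj⟩
    have heq : (monomial μ (1 : R)) =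
        (X j : MvPolynomial (Fin r) R) ^ p * monomial (μ - Finsupp.single j p) 1 := by
      rw [X_pow_eq_monomial, monomial_mul, one_mul,
        add_tsub_cancel_of_le (by rwa [Finsupp.single_le_iff])]
    rw [heq]
    exact Ideal.mul_mem_right _ _ (hXp j)
  -- the candidate basis family
  let π := (Ideal.Quotient.mkₐ R J).toLinearMap
  let μof : (Fin r → Fin p) → (Fin r →₀ ℕ) :=
    fun d => Finsupp.equivFunOnFinite.symm fun j => (d j : ℕ)
  have hμof : ∀ d j, μof d j = (d j : ℕ) := fun d j => rfl
  have hμinj : Function.Injective μof := by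
    intro a b hab
    funext j
    have := congrArg (fun m : Fin r →₀ ℕ => m j) hab
    simpa [hμof, Fin.val_injective.eq_iff] using this
  let v : (Fin r → Fin p) → (MvPolynomial (Fin r) R ⧸ J) :=
    fun d => π (monomial (μof d) 1)
  -- linear independence
  have hli : LinearIndependent R v := by
    rw [linearIndependent_iff']
    intro s g hsum i hi
    have h0 : (∑ d ∈ s, g d • monomial (μof d) (1 : R)) ∈ J := by
      rw [← Ideal.Quotient.eq_zero_iff_mem]
      have : Ideal.Quotient.mk J (∑ d ∈ s, g d • monomial (μof d) (1 : R)) =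
          π (∑ d ∈ s, g d • monomial (μof d) (1 : R)) := rfl
      rw [this, map_sum]
      simpa only [map_smul] using hsum
    have hc := hcoeff _ h0 (μof i) (fun j => by rw [hμof]; exact (i j).isLt)
    rw [coeff_sum] at hc
    have hrw : ∀ d ∈ s, coeff (μof i) (g d • monomial (μof d) (1 : R)) =
        if d = i then g d else 0 := by
      intro d _
      rw [coeff_smul, coeff_monomial]
      by_cases h : d = i
      · simp [h]
      · rw [if_neg (fun he => h (hμinj he)), if_neg h, smul_zero]
    rw [Finset.sum_congr rfl hrw, Finset.sum_ite_eq' s i (fun d => g d), if_pos hi] at hc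
    exact hc
  -- spanning
  have hmem : ∀ μ : Fin r →₀ ℕ,
      π (monomial μ (1 : R)) ∈ Submodule.span R (Set.range v) := by
    intro μ
    by_cases h : ∀ j, μ j < p
    · have : μ = μof fun j => ⟨μ j, h j⟩ := by
        ext j; rw [hμof]
      rw [this]
      exact Submodule.subset_span ⟨_, rfl⟩
    · push_neg at h
      obtain ⟨j, hj⟩ := h
      have h0 : π (monomial μ (1 : R)) = 0 := by
        show Ideal.Quotient.mk J (monomial μ (1 : R)) = 0
        rw [Ideal.Quotient.eq_zero_iff_mem]
        exact hmono μ ⟨j, hj⟩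
      rw [h0]
      exact Submodule.zero_mem _
  have hspan : ⊤ ≤ Submodule.span R (Set.range v) := by
    intro x _
    obtain ⟨q, rfl⟩ := Ideal.Quotient.mk_surjective x
    have hq2 : q = ∑ μ ∈ q.support, coeff μ q • monomial μ 1 := by
      conv_lhs => rw [q.as_sum]
      exact Finset.sum_congr rfl fun μ _ => by rw [smul_monomial, smul_eq_mul, mul_one]
    rw [show Ideal.Quotient.mk J q = π q from rfl, hq2, map_sum]
    exact Submodule.sum_mem _ fun μ _ => by
      rw [map_smul]; exact Submodule.smul_mem _ _ (hmem μ)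
  -- assemble the basis
  have hcard : Fintype.card (Fin r → Fin p) = p ^ r := by
    simp [Fintype.card_fun]
  exact ⟨(Module.Basis.mk hli hspan).reindex (Fintype.equivFinOfCardEq hcard)⟩
end
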